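/- Let Z(t) be an n×m matrix of full rank satisfying Ż = AZ with A symmetric, and let X(t) = 2Z(ZᵀZ)⁻¹Zᵀ - I be the reflection with respect to the column space of Z. Then X(t) satisfies Ẋ = A - XAX. -/

import Mathlib

open Matrix

attribute [local instance] Matrix.linftyOpNormedAddCommGroup Matrix.linftyOpNormedRing Matrix.linftyOpNormedSpace
attribute [local instance] Matrix.linftyOpNormedAlgebra

section aux
variable {a b c : ℕ}

variable {a b c : ℕ}

noncomputable def matMulBilin (a b c : ℕ) :
    Matrix (Fin a) (Fin b) ℝ →ₗ[ℝ] Matrix (Fin b) (Fin c) ℝ →ₗ[ℝ] Matrix (Fin a) (Fin c) ℝ :=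
  LinearMap.mk₂ ℝ HMul.hMul Matrix.add_mul (fun r x y => Matrix.smul_mul r x y)
    Matrix.mul_add (fun r x y => Matrix.mul_smul x r y)

noncomputable def matMulCLM (a b c : ℕ) :
    Matrix (Fin a) (Fin b) ℝ →L[ℝ] Matrix (Fin b) (Fin c) ℝ →L[ℝ] Matrix (Fin a) (Fin c) ℝ :=
  LinearMap.toContinuousLinearMap
    ((LinearMap.toContinuousLinearMap :
        (Matrix (Fin b) (Fin c) ℝ →ₗ[ℝ] Matrix (Fin a) (Fin c) ℝ) ≃ₗ[ℝ] _).toLinearMap.comp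
      (matMulBilin a b c))

theorem HasDerivAt.matMul {f : ℝ → Matrix (Fin a) (Fin b) ℝ} {g : ℝ → Matrix (Fin b) (Fin c) ℝ}
    {f' : Matrix (Fin a) (Fin b) ℝ} {g' : Matrix (Fin b) (Fin c) ℝ} {t : ℝ}
    (hf : HasDerivAt f f' t) (hg : HasDerivAt g g' t) :
    HasDerivAt (fun s => f s * g s) (f' * g t + f t * g') t := by
  have hb : IsBoundedBilinearMap ℝ (fun p : Matrix (Fin a) (Fin b) ℝ × Matrix (Fin b) (Fin c) ℝ =>
      p.1 * p.2) := by
    have h := (matMulCLM a b c).isBoundedBilinearMap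
    have he : (fun p : Matrix (Fin a) (Fin b) ℝ × Matrix (Fin b) (Fin c) ℝ =>
        matMulCLM a b c p.1 p.2) = fun p => p.1 * p.2 := by
      funext p; simp [matMulCLM, matMulBilin]
    exact he ▸ h
  have h2 := (hb.hasFDerivAt (f t, g t)).comp_hasDerivAt t (hf.prodMk hg)
  have h3 : HasDerivAt (fun s => f s * g s)
      ((hb.toContinuousLinearMap (f t)) g' + (hb.toContinuousLinearMap f') (g t)) t := by
    simp [IsBoundedBilinearMap.deriv] at h2
    exact h2
  have h4 : ∀ (x : Matrix (Fin a) (Fin b) ℝ) (y : Matrix (Fin b) (Fin c) ℝ),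
      hb.toContinuousLinearMap x y = x * y := fun x y => rfl
  rw [h4, h4, add_comm] at h3
  exact h3

end aux

/-- If `Z(t)` is an `n × m` matrix of full rank (`ZᵀZ` invertible) with `Ż = A Z`,
`A` symmetric, then the reflection `X = 2 Z (ZᵀZ)⁻¹ Zᵀ - I` with respect to the column
space of `Z` satisfies `Ẋ = A - X A X`. -/
theorem reflection_flow (n m : ℕ)
    (A : Matrix (Fin n) (Fin n) ℝ) (hA : Aᵀ = A)
    (Z : ℝ → Matrix (Fin n) (Fin m) ℝ)
    (hZ : ∀ t, HasDerivAt Z (A * Z t) t)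
    (hrank : ∀ t, IsUnit ((Z t)ᵀ * Z t)) :
    ∀ t, HasDerivAt
      (fun s => (2 : ℝ) • (Z s * ((Z s)ᵀ * Z s)⁻¹ * (Z s)ᵀ) - 1)
      (A - ((2 : ℝ) • (Z t * ((Z t)ᵀ * Z t)⁻¹ * (Z t)ᵀ) - 1) * A *
           ((2 : ℝ) • (Z t * ((Z t)ᵀ * Z t)⁻¹ * (Z t)ᵀ) - 1)) t := by
  intro t
  set u : (Matrix (Fin m) (Fin m) ℝ)ˣ := (hrank t).unit with hu_def
  have hu : (Z t)ᵀ * Z t = ↑u := ((hrank t).unit_spec).symm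
  set B : Matrix (Fin m) (Fin m) ℝ := ↑u⁻¹ with hB_def
  let L : Matrix (Fin n) (Fin m) ℝ →L[ℝ] Matrix (Fin m) (Fin n) ℝ :=
    LinearMap.toContinuousLinearMap ((Matrix.transposeLinearEquiv (Fin n) (Fin m) ℝ ℝ).toLinearMap)
  have hLapp : ∀ M : Matrix (Fin n) (Fin m) ℝ, L M = Mᵀ := fun M => rfl
  have hZT : HasDerivAt (fun s => (Z s)ᵀ) (A * Z t)ᵀ t := by
    have := (L.hasFDerivAt (x := Z t)).comp_hasDerivAt t (hZ t)
    exact this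
  have hG : HasDerivAt (fun s => (Z s)ᵀ * Z s)
      ((A * Z t)ᵀ * Z t + (Z t)ᵀ * (A * Z t)) t := hZT.matMul (hZ t)
  have hInv : HasDerivAt (fun s => Ring.inverse ((Z s)ᵀ * Z s))
      (-(B * ((A * Z t)ᵀ * Z t + (Z t)ᵀ * (A * Z t)) * B)) t := by
    have h := (hu ▸ hasFDerivAt_ringInverse (𝕜 := ℝ) u :
        HasFDerivAt Ring.inverse (-(ContinuousLinearMap.mulLeftRight ℝ _ ↑u⁻¹) ↑u⁻¹)
          ((Z t)ᵀ * Z t)).comp_hasDerivAt t hG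
    exact h
  have hInvEq : ∀ s, ((Z s)ᵀ * Z s)⁻¹ = Ring.inverse ((Z s)ᵀ * Z s) := fun s =>
    Matrix.nonsing_inv_eq_ringInverse _
  have hInvT : ((Z t)ᵀ * Z t)⁻¹ = B := by rw [hInvEq, hu, Ring.inverse_unit]
  have hP : HasDerivAt (fun s => Z s * ((Z s)ᵀ * Z s)⁻¹ * (Z s)ᵀ)
      (((A * Z t) * B + Z t * -(B * ((A * Z t)ᵀ * Z t + (Z t)ᵀ * (A * Z t)) * B)) * (Z t)ᵀ
        + Z t * B * (A * Z t)ᵀ) t := by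
    simp only [hInvEq]
    have := ((hZ t).matMul hInv).matMul hZT
    rw [hu, Ring.inverse_unit] at this
    exact this
  have hX := ((hP.const_smul (2:ℝ)).sub_const 1)
  refine hX.congr_deriv ?_
  symm
  rw [hInvT, transpose_mul, hA]
  simp only [smul_sub, sub_mul, mul_sub, one_mul, mul_one, smul_mul_assoc, mul_smul_comm,
    Matrix.mul_add, Matrix.add_mul, Matrix.neg_mul, Matrix.mul_neg, smul_neg, mul_assoc, Matrix.mul_assoc]
  module
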